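/- Let n ≥ 2 and let t₁, …, tₙ be positive reals with ∑ᵢ tᵢ = 1. Then for any fixed index i and all y₁, …, yₙ ∈ ℝ, ∑ₚ (yₚ²/tₚ) − 4yᵢ·∑ₚ yₚ ≥ (1 − 8tᵢ + 4tᵢ²)·(∑ₚ yₚ)². -/

import Mathlib

open Finset

/-- the Lagrange-multiplier inequality from Section 5 (Lemma 6.2 of Gao–Li–Ma):
if `tₚ > 0` sum to `1`, then `∑ₚ yₚ²/tₚ − 4yᵢ ∑ₚ yₚ ≥ (1 − 8tᵢ + 4tᵢ²)(∑ₚ yₚ)²`. -/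
theorem stmt2 {n : ℕ} (hn : 2 ≤ n) (t y : Fin n → ℝ)
    (ht : ∀ p, 0 < t p) (hsum : ∑ p, t p = 1) (i : Fin n) :
    (1 - 8 * t i + 4 * t i ^ 2) * (∑ p, y p) ^ 2 ≤
      ∑ p, (y p) ^ 2 / t p - 4 * y i * ∑ p, y p := by
  set s := (univ : Finset (Fin n)).erase i with hs
  have hmem : i ∈ (univ : Finset (Fin n)) := mem_univ i
  have hts : ∑ p ∈ s, t p = 1 - t i := by
    have h := Finset.add_sum_erase univ t hmem
    linarith [h, hsum]
  have hys : ∑ p ∈ s, y p = (∑ p, y p) - y i := by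
    have := Finset.add_sum_erase univ y hmem
    linarith
  have hsplit : ∑ p, (y p) ^ 2 / t p = (y i)^2 / t i + ∑ p ∈ s, (y p)^2 / t p :=
    (Finset.add_sum_erase univ (fun p => (y p)^2 / t p) hmem).symm
  have hCS : ((∑ p, y p) - y i) ^ 2 / (1 - t i) ≤ ∑ p ∈ s, (y p)^2 / t p := by
    have := sq_sum_div_le_sum_sq_div s y (fun p _ => ht p)
    rwa [hys, hts] at this
  -- t i < 1 since there exists another positive term
  have hne : s.Nonempty := by
    have : 1 < (univ : Finset (Fin n)).card := by simpa using (show 1 < n by omega)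
    exact (Finset.erase_nonempty hmem).mpr (Finset.one_lt_card.mp this)
  have hlt : t i < 1 := by
    have hpos : 0 < ∑ p ∈ s, t p := Finset.sum_pos (fun p _ => ht p) hne
    linarith [hts ▸ hpos]
  set S := ∑ p, y p
  set a := y i
  set u := t i with hu
  have h1 : 0 < u := ht i
  have h2 : 0 < 1 - u := by linarith
  have key : (1 - 8*u + 4*u^2) * S^2 ≤ a^2/u + (S - a)^2/(1-u) - 4*a*S := by
    rw [← sub_nonneg]
    have heq : a^2/u + (S - a)^2/(1-u) - 4*a*S - (1 - 8*u + 4*u^2) * S^2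
        = (a - u*(3-2*u)*S)^2 / (u*(1-u)) := by
      field_simp
      ring
    rw [heq]
    positivity
  calc (1 - 8*u + 4*u^2) * S^2 ≤ a^2/u + (S - a)^2/(1-u) - 4*a*S := key
    _ ≤ ∑ p, (y p) ^ 2 / t p - 4 * a * S := by
        rw [hsplit]; linarith [hCS]
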